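/- Let n ≥ 2, Λ = (λ₁,…,λ_{n+1}) ∈ ℝ^{n+1} and 𝐤 = (k₁,…,k_n) ∈ ℕⁿ. Set 𝐤̃ = (k₂,…,k_n) and Λ̃ = (λ₁+λ₂+2k₁, λ₃, …, λ_{n+1}), and let φ(y,u) = (y₁(1+u)/2, y₁(1−u)/2, y₂, …, y_{n−1}) for y ∈ D_{n−1}, u ∈ (−1,1). Then for all y ∈ D_{n−1} and u ∈ (−1,1): R_𝐤^Λ(φ(y,u)) = R_{𝐤̃}^{Λ̃}(y) · P_{k₁}^{λ₂−1, λ₁−1}(u) · y₁^{k₁}, where R_𝐤^Λ is the family on D_n and R_{𝐤̃}^{Λ̃} is the analogous family on D_{n−1}. -/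

import Mathlib

open MeasureTheory Finset

noncomputable section

/-- Generalized binomial coefficient `C(z, m) = z(z-1)⋯(z-m+1)/m!`. -/
def genBinom (z : ℝ) (m : ℕ) : ℝ := (∏ i ∈ Finset.range m, (z - i)) / (m.factorial : ℝ)

/-- Jacobi polynomial `P_n^{α,β}(t)`. -/
def jacobiP (n : ℕ) (α β t : ℝ) : ℝ :=
  (1 / 2 ^ n) * ∑ s ∈ Finset.range (n + 1),
    genBinom ((n : ℝ) + α) (n - s) * genBinom ((n : ℝ) + β) s * (t - 1) ^ s * (t + 1) ^ (n - s)

/-- Sum of the first `m` coordinates of `x`. -/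
def psum {n : ℕ} (x : Fin n → ℝ) (m : ℕ) : ℝ :=
  ∑ j : Fin n, if (j : ℕ) < m then x j else 0

/-- The open simplex `D_n`. -/
def simplexD (n : ℕ) : Set (Fin n → ℝ) := {x | (∀ i, 0 < x i) ∧ psum x n < 1}

/-- `α_i = |Λ^{(i)}| + 2|𝐤^{(i-1)}|` (1-based `i`). -/
def alphExp {n : ℕ} (Λ : Fin (n + 1) → ℝ) (k : Fin n → ℕ) (i : ℕ) : ℝ :=
  (∑ j : Fin (n + 1), if (j : ℕ) < i then Λ j else 0)
    + 2 * ∑ j : Fin n, if (j : ℕ) < i - 1 then (k j : ℝ) else 0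

/-- The orthogonal polynomials `R_𝐤^Λ` on the simplex `D_n`. -/
def Rpoly {n : ℕ} (Λ : Fin (n + 1) → ℝ) (k : Fin n → ℕ) (x : Fin n → ℝ) : ℝ :=
  (if h : 0 < n then
      jacobiP (k ⟨n - 1, by omega⟩) (Λ (Fin.last n) - 1) (alphExp Λ k n - 1)
        (2 * psum x n - 1)
    else 1) *
  ∏ j : Fin n, (if h : (j : ℕ) + 1 < n then
      (psum x ((j : ℕ) + 1) + x ⟨(j : ℕ) + 1, h⟩) ^ (k j) *
        jacobiP (k j) (Λ ⟨(j : ℕ) + 1, by omega⟩ - 1) (alphExp Λ k ((j : ℕ) + 1) - 1)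
          ((psum x ((j : ℕ) + 1) - x ⟨(j : ℕ) + 1, h⟩) /
            (psum x ((j : ℕ) + 1) + x ⟨(j : ℕ) + 1, h⟩))
    else 1)

/-- The map `φ(y,u) = (y₁(1+u)/2, y₁(1-u)/2, y₂, …, y_{n-1})` from
`D_{n-1} × (-1,1)` to `D_n`. -/
def phiMap (n : ℕ) (hn : 2 ≤ n) (y : Fin (n - 1) → ℝ) (u : ℝ) : Fin n → ℝ := fun j =>
  if h0 : (j : ℕ) = 0 then y ⟨0, by omega⟩ * (1 + u) / 2
  else if h1 : (j : ℕ) = 1 then y ⟨0, by omega⟩ * (1 - u) / 2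
  else y ⟨(j : ℕ) - 1, by have := j.isLt; omega⟩

lemma psum_zero {n : ℕ} (x : Fin n → ℝ) : psum x 0 = 0 := by simp [psum]

lemma psum_succ {n : ℕ} (x : Fin n → ℝ) (i : ℕ) :
    psum x (i + 1) = psum x i + (if h : i < n then x ⟨i, h⟩ else 0) := by
  unfold psum
  have h1 : ∀ j : Fin n,
      (if (j : ℕ) < i + 1 then x j else 0)
        = (if (j : ℕ) < i then x j else 0) + (if (j : ℕ) = i then x j else 0) := by
    intro j
    by_cases h : (j : ℕ) < i
    · rw [if_pos (by omega), if_pos h, if_neg (by omega), add_zero]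
    · by_cases h2 : (j : ℕ) = i
      · rw [if_pos (by omega), if_neg h, if_pos h2, zero_add]
      · rw [if_neg (by omega), if_neg h, if_neg h2, add_zero]
  rw [Finset.sum_congr rfl fun j _ => h1 j, Finset.sum_add_distrib]
  congr 1
  by_cases h : i < n
  · rw [dif_pos h, Finset.sum_eq_single (⟨i, h⟩ : Fin n)]
    · rw [if_pos rfl]
    · intro b _ hb
      exact if_neg fun e => hb (Fin.ext e)
    · simp
  · rw [dif_neg h]
    apply Finset.sum_eq_zero
    intro j _
    exact if_neg (by have := j.isLt; omega)

lemma psum_shift {n : ℕ} (f : Fin (n + 1) → ℝ) (i : ℕ) :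
    psum (fun j : Fin n => f j.succ) i + f 0 = psum f (i + 1) := by
  induction i with
  | zero =>
    rw [psum_zero, psum_succ, psum_zero, dif_pos (Nat.succ_pos n)]
    norm_num
  | succ i ih =>
    rw [psum_succ, psum_succ f (i + 1), ← ih]
    by_cases h : i < n
    · rw [dif_pos h, dif_pos (by omega)]
      have : f (Fin.succ ⟨i, h⟩) = f ⟨i + 1, by omega⟩ := rfl
      rw [this]; ring
    · rw [dif_neg h, dif_neg (by omega)]; ring

lemma alphExp_psum {n : ℕ} (Λ : Fin (n + 1) → ℝ) (k : Fin n → ℕ) (i : ℕ) :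
    alphExp Λ k i = psum Λ i + 2 * psum (fun j => (k j : ℝ)) (i - 1) := rfl

lemma psum_mod (m : ℕ) (Λ : Fin (m + 2) → ℝ) (L : Fin (m + 1) → ℝ) (c : ℝ)
    (hL0 : ∀ h : 0 < m + 1, L ⟨0, h⟩ = c)
    (hLs : ∀ (j : ℕ) (h : j + 1 < m + 1) (h2 : j + 2 < m + 2), L ⟨j + 1, h⟩ = Λ ⟨j + 2, h2⟩)
    (i : ℕ) :
    psum L (i + 1) = psum Λ (i + 2) - Λ 0 - Λ 1 + c := by
  induction i with
  | zero =>
    rw [psum_succ, psum_zero, psum_succ, psum_succ, psum_zero,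
      dif_pos (show 0 < m + 1 by omega), dif_pos (show 1 < m + 2 by omega),
      dif_pos (show 0 < m + 2 by omega), hL0]
    have e0 : (⟨0, show 0 < m + 2 by omega⟩ : Fin (m + 2)) = 0 := Fin.ext (by simp)
    have e1 : (⟨1, show 1 < m + 2 by omega⟩ : Fin (m + 2)) = 1 := Fin.ext (by simp)
    rw [e0, e1]; ring
  | succ i ih =>
    show psum L (i + 1 + 1) = psum Λ (i + 2 + 1) - Λ 0 - Λ 1 + c
    rw [psum_succ L (i + 1), psum_succ Λ (i + 2), ih]
    by_cases h : i + 1 < m + 1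
    · rw [dif_pos h, dif_pos (show i + 2 < m + 2 by omega),
        hLs i h (show i + 2 < m + 2 by omega)]
      ring
    · rw [dif_neg h, dif_neg (by omega)]; ring

lemma alph_shift (m : ℕ) (Λ : Fin (m + 2) → ℝ) (k : Fin (m + 1) → ℕ)
    (L : Fin (m + 1) → ℝ) (K : Fin m → ℕ)
    (hL0 : ∀ h : 0 < m + 1, L ⟨0, h⟩ = Λ 0 + Λ 1 + 2 * (k 0 : ℝ))
    (hLs : ∀ (j : ℕ) (h : j + 1 < m + 1) (h2 : j + 2 < m + 2), L ⟨j + 1, h⟩ = Λ ⟨j + 2, h2⟩)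
    (hKs : ∀ j : Fin m, K j = k j.succ)
    (i : ℕ) : alphExp L K (i + 1) = alphExp Λ k (i + 2) := by
  have c1 : alphExp L K (i + 1) = psum L (i + 1) + 2 * psum (fun j => (K j : ℝ)) i := rfl
  have c2 : alphExp Λ k (i + 2) = psum Λ (i + 2) + 2 * psum (fun j => (k j : ℝ)) (i + 1) := rfl
  have hK' : (fun j : Fin m => (K j : ℝ)) = fun j => ((fun j' : Fin (m + 1) => (k j' : ℝ)) j.succ) := by
    funext j; rw [hKs]
  have h2 := psum_shift (fun j' : Fin (m + 1) => (k j' : ℝ)) i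
  have h1 := psum_mod m Λ L (Λ 0 + Λ 1 + 2 * (k 0 : ℝ)) hL0 hLs i
  rw [c1, c2, h1, hK']
  have h2' : psum (fun j : Fin m => ((fun j' : Fin (m + 1) => (k j' : ℝ)) j.succ)) i
      + (k 0 : ℝ) = psum (fun j' : Fin (m + 1) => (k j' : ℝ)) (i + 1) := h2
  linarith [h2']

lemma phiMap_zero (n : ℕ) (hn : 2 ≤ n) (y : Fin (n - 1) → ℝ) (u : ℝ) (h : 0 < n) :
    phiMap n hn y u ⟨0, h⟩ = y ⟨0, by omega⟩ * (1 + u) / 2 := by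
  simp [phiMap]

lemma phiMap_one (n : ℕ) (hn : 2 ≤ n) (y : Fin (n - 1) → ℝ) (u : ℝ) (h : 1 < n) :
    phiMap n hn y u ⟨1, h⟩ = y ⟨0, by omega⟩ * (1 - u) / 2 := by
  simp [phiMap]

lemma phiMap_ge (n : ℕ) (hn : 2 ≤ n) (y : Fin (n - 1) → ℝ) (u : ℝ) (j : ℕ)
    (h : j + 2 < n) (h' : j + 1 < n - 1) :
    phiMap n hn y u ⟨j + 2, h⟩ = y ⟨j + 1, h'⟩ := by
  simp only [phiMap]
  rw [dif_neg (show ¬((⟨j + 2, h⟩ : Fin n) : ℕ) = 0 by simp),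
    dif_neg (show ¬((⟨j + 2, h⟩ : Fin n) : ℕ) = 1 by simp)]
  congr 1

/-- Factorization `R_𝐤^Λ(φ(y,u)) = R_{𝐤̃}^{Λ̃}(y) · P_{k₁}^{λ₂-1,λ₁-1}(u) · y₁^{k₁}`.
Here the dimension is `n = m + 1` with `m ≥ 1`, i.e. `n ≥ 2`. -/
theorem stmt9 (m : ℕ) (hm : 1 ≤ m) (Λ : Fin (m + 2) → ℝ) (k : Fin (m + 1) → ℕ) :
    ∀ y ∈ simplexD m, ∀ u ∈ Set.Ioo (-1 : ℝ) 1,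
      Rpoly Λ k (phiMap (m + 1) (by omega) y u)
        = Rpoly (n := m)
            (fun j : Fin (m + 1) => if (j : ℕ) = 0 then Λ 0 + Λ 1 + 2 * (k 0 : ℝ)
              else Λ ⟨(j : ℕ) + 1, by have := j.isLt; omega⟩)
            (fun j : Fin m => k ⟨(j : ℕ) + 1, by have := j.isLt; omega⟩) y
          * jacobiP (k 0) (Λ 1 - 1) (Λ 0 - 1) u * y ⟨0, by omega⟩ ^ (k 0) := by
  intro y hy u hu
  have y0pos : 0 < y ⟨0, by omega⟩ := hy.1 _
  have hy0ne : y ⟨0, by omega⟩ ≠ 0 := ne_of_gt y0pos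
  set x : Fin (m + 1) → ℝ := phiMap (m + 1) (by omega) y u with hxdef
  set L : Fin (m + 1) → ℝ := fun j : Fin (m + 1) =>
      if (j : ℕ) = 0 then Λ 0 + Λ 1 + 2 * (k 0 : ℝ)
      else Λ ⟨(j : ℕ) + 1, by have := j.isLt; omega⟩ with hLdef
  set K : Fin m → ℕ := fun j : Fin m => k ⟨(j : ℕ) + 1, by have := j.isLt; omega⟩ with hKdef
  have hL0 : ∀ h : 0 < m + 1, L ⟨0, h⟩ = Λ 0 + Λ 1 + 2 * (k 0 : ℝ) := by
    intro h; simp [hLdef]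
  have hLs : ∀ (j : ℕ) (h : j + 1 < m + 1) (h2 : j + 2 < m + 2),
      L ⟨j + 1, h⟩ = Λ ⟨j + 2, h2⟩ := by
    intro j h h2
    simp only [hLdef]
    rw [if_neg (show ¬((⟨j + 1, h⟩ : Fin (m + 1)) : ℕ) = 0 by simp)]
  have hKs : ∀ j : Fin m, K j = k j.succ := fun j => rfl
  have hx2 : ∀ i : ℕ, psum x (i + 2) = psum y (i + 1) := by
    intro i
    induction i with
    | zero =>
      show psum x (0 + 1 + 1) = psum y (0 + 1)
      rw [psum_succ x (0 + 1), psum_succ x 0, psum_zero, psum_succ y 0, psum_zero,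
        dif_pos (show 0 < m + 1 by omega), dif_pos (show 0 + 1 < m + 1 by omega),
        dif_pos (show 0 < m by omega), hxdef]
      rw [phiMap_zero (m + 1) (by omega) y u]
      rw [show (⟨0 + 1, show 0 + 1 < m + 1 by omega⟩ : Fin (m + 1))
            = ⟨1, show 1 < m + 1 by omega⟩ from rfl]
      rw [phiMap_one (m + 1) (by omega) y u]
      ring
    | succ i ih =>
      show psum x (i + 2 + 1) = psum y (i + 1 + 1)
      rw [psum_succ x (i + 2), psum_succ y (i + 1), ih]
      congr 1
      by_cases h : i + 2 < m + 1
      · rw [dif_pos h, dif_pos (show i + 1 < m by omega), hxdef]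
        exact phiMap_ge (m + 1) (by omega) y u i h (by omega)
      · rw [dif_neg h, dif_neg (show ¬ i + 1 < m by omega)]
  have hx1 : psum x (0 + 1) = y ⟨0, by omega⟩ * (1 + u) / 2 := by
    rw [psum_succ x 0, psum_zero, dif_pos (show 0 < m + 1 by omega), hxdef,
      phiMap_zero (m + 1) (by omega) y u]
    ring
  have hA1 : alphExp Λ k (0 + 1) = Λ 0 := by
    have c1 : alphExp Λ k (0 + 1)
        = psum Λ (0 + 1) + 2 * psum (fun j : Fin (m + 1) => (k j : ℝ)) 0 := rfl
    rw [c1, psum_succ Λ 0, psum_zero, psum_zero, dif_pos (show 0 < m + 2 by omega)]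
    have e0 : (⟨0, show 0 < m + 2 by omega⟩ : Fin (m + 2)) = 0 := Fin.ext (by simp)
    rw [e0]; ring
  simp only [Rpoly]
  rw [dif_pos (show 0 < m + 1 by omega), dif_pos (show 0 < m by omega), Fin.prod_univ_succ]
  simp only [Fin.val_zero, Fin.val_succ]
  erw [dif_pos (show 0 + 1 < m + 1 by omega)]
  rw [hx1]
  have hxv1 : x ⟨0 + 1, show 0 + 1 < m + 1 by omega⟩ = y ⟨0, by omega⟩ * (1 - u) / 2 := by
    rw [hxdef]; exact phiMap_one (m + 1) (by omega) y u (by omega)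
  rw [hxv1]
  have eΛ1 : (Λ ⟨0 + 1, show 0 + 1 < m + 2 by omega⟩) = Λ 1 := congrArg Λ (Fin.ext (by simp))
  rw [eΛ1, hA1]
  have hsum : y ⟨0, by omega⟩ * (1 + u) / 2 + y ⟨0, by omega⟩ * (1 - u) / 2
      = y ⟨0, by omega⟩ := by ring
  have hrat : (y ⟨0, by omega⟩ * (1 + u) / 2 - y ⟨0, by omega⟩ * (1 - u) / 2)
      / (y ⟨0, by omega⟩ * (1 + u) / 2 + y ⟨0, by omega⟩ * (1 - u) / 2) = u := by
    rw [hsum, show (y ⟨0, by omega⟩ * (1 + u) / 2 - y ⟨0, by omega⟩ * (1 - u) / 2)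
        = y ⟨0, by omega⟩ * u by ring]
    exact mul_div_cancel_left₀ u hy0ne
  rw [hrat, hsum]
  have eS : psum x (m + 1) = psum y m := by
    have h := hx2 (m - 1)
    rw [show m - 1 + 2 = m + 1 by omega, show m - 1 + 1 = m by omega] at h
    exact h
  have eA : alphExp Λ k (m + 1) = alphExp L K m := by
    have h := alph_shift m Λ k L K hL0 hLs hKs (m - 1)
    rw [show m - 1 + 1 = m by omega, show m - 1 + 2 = m + 1 by omega] at h
    exact h.symm
  have eK : k ⟨m + 1 - 1, by omega⟩ = K ⟨m - 1, by omega⟩ := by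
    simp only [hKdef]
    congr 1
    exact Fin.ext (by simp; omega)
  have eL : Λ (Fin.last (m + 1)) = L (Fin.last m) := by
    simp only [hLdef]
    rw [if_neg (show ¬((Fin.last m : ℕ) = 0) by simp [Fin.last]; omega)]
    exact congrArg Λ (Fin.ext (by simp [Fin.last]))
  rw [eS, eA, eK, eL]
  have hterm : ∀ j : Fin m,
      (if h : (j : ℕ) + 1 + 1 < m + 1 then
        (psum x ((j : ℕ) + 1 + 1) + x ⟨(j : ℕ) + 1 + 1, h⟩) ^ k (Fin.succ j) *
          jacobiP (k (Fin.succ j)) (Λ ⟨(j : ℕ) + 1 + 1, by omega⟩ - 1)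
            (alphExp Λ k ((j : ℕ) + 1 + 1) - 1)
            ((psum x ((j : ℕ) + 1 + 1) - x ⟨(j : ℕ) + 1 + 1, h⟩) /
              (psum x ((j : ℕ) + 1 + 1) + x ⟨(j : ℕ) + 1 + 1, h⟩))
      else 1)
      = (if h : (j : ℕ) + 1 < m then
        (psum y ((j : ℕ) + 1) + y ⟨(j : ℕ) + 1, h⟩) ^ K j *
          jacobiP (K j) (L ⟨(j : ℕ) + 1, by omega⟩ - 1) (alphExp L K ((j : ℕ) + 1) - 1)
            ((psum y ((j : ℕ) + 1) - y ⟨(j : ℕ) + 1, h⟩) /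
              (psum y ((j : ℕ) + 1) + y ⟨(j : ℕ) + 1, h⟩))
      else 1) := by
    intro j
    by_cases h : (j : ℕ) + 1 < m
    · rw [dif_pos (show (j : ℕ) + 1 + 1 < m + 1 by omega), dif_pos h]
      have e1 : psum x ((j : ℕ) + 1 + 1) = psum y ((j : ℕ) + 1) := hx2 (j : ℕ)
      have e2 : x ⟨(j : ℕ) + 1 + 1, show (j : ℕ) + 1 + 1 < m + 1 by omega⟩
          = y ⟨(j : ℕ) + 1, h⟩ := by
        rw [hxdef]
        exact phiMap_ge (m + 1) (by omega) y u (j : ℕ) (by omega) (by omega)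
      have e3 : Λ ⟨(j : ℕ) + 1 + 1, show (j : ℕ) + 1 + 1 < m + 2 by omega⟩
          = L ⟨(j : ℕ) + 1, show (j : ℕ) + 1 < m + 1 by omega⟩ :=
        (hLs (j : ℕ) (by omega) (by omega)).symm
      have e4 : alphExp Λ k ((j : ℕ) + 1 + 1) = alphExp L K ((j : ℕ) + 1) :=
        (alph_shift m Λ k L K hL0 hLs hKs (j : ℕ)).symm
      have e5 : k (Fin.succ j) = K j := (hKs j).symm
      rw [e1, e2, e3, e4, e5]
    · rw [dif_neg (show ¬((j : ℕ) + 1 + 1 < m + 1) by omega), dif_neg h]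
  rw [Finset.prod_congr rfl fun j _ => hterm j]
  ring
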